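/- Let ρ ≥ 1 be an integer, χ a nonzero rational number, d₀ a rational number, d₁,…,d_ρ rational numbers with d₁ ≠ 0, p a rational number, and (b_{ik})_{1≤i,k≤ρ} a rational matrix. Set a_j = Σ_{k=1}^{ρ} d_k b_{kj} for j = 1,…,ρ, and let n₂,…,n_ρ be rational numbers. Define the (ρ+1) × (ρ+1) matrix M by: M₀₀ = d₀; M_{i0} = 0 for 1 ≤ i ≤ ρ; M_{0j} arbitrary for j ≥ 1; M_{1j} = p·a_j for 1 ≤ j ≤ ρ; and M_{ij} = −χ·b_{ij} + n_i·a_j for 2 ≤ i ≤ ρ and 1 ≤ j ≤ ρ. Then det M = (−χ)^{ρ−1} · d₀ · d₁ · p · det(b_{ik}). -/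

import Mathlib

/-- Determinant identity for the intersection matrix of determinant line
bundles with testing curves: the `(ρ+1) × (ρ+1)` matrix `M` with first column
`(d₀, 0, …, 0)ᵀ`, second row of the lower block `p·a`, and remaining rows
`−χ·bᵢ + nᵢ·a`, where `a_j = Σ_k d_k b_{kj}`, has determinant
`(−χ)^{ρ−1} · d₀ · d₁ · p · det b`. -/
theorem stmt_2 (ρ : ℕ) (hρ : 1 ≤ ρ) (χ : ℚ) (hχ : χ ≠ 0)
    (d₀ : ℚ) (d : Fin ρ → ℚ) (hd₁ : d ⟨0, hρ⟩ ≠ 0) (p : ℚ)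
    (b : Matrix (Fin ρ) (Fin ρ) ℚ) (n : Fin ρ → ℚ) (a : Fin ρ → ℚ)
    (ha : ∀ j : Fin ρ, a j = ∑ k : Fin ρ, d k * b k j)
    (M : Matrix (Fin (ρ + 1)) (Fin (ρ + 1)) ℚ)
    (hM00 : M 0 0 = d₀)
    (hMi0 : ∀ i : Fin ρ, M i.succ 0 = 0)
    (hM1j : ∀ j : Fin ρ, M (Fin.succ ⟨0, hρ⟩) j.succ = p * a j)
    (hMij : ∀ i : Fin ρ, i ≠ ⟨0, hρ⟩ →
      ∀ j : Fin ρ, M i.succ j.succ = -χ * b i j + n i * a j) :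
    M.det = (-χ) ^ (ρ - 1) * d₀ * d ⟨0, hρ⟩ * p * b.det := by
  set z : Fin ρ := ⟨0, hρ⟩ with hz
  set N : Matrix (Fin ρ) (Fin ρ) ℚ := M.submatrix Fin.succ Fin.succ with hNdef
  -- Step 1: expand along the first column
  have step1 : M.det = d₀ * N.det := by
    rw [Matrix.det_succ_column_zero, Fin.sum_univ_succ]
    simp [hM00, hMi0, Fin.succAbove_zero, hNdef]
  -- the lower-right block factors as C * b
  set C : Matrix (Fin ρ) (Fin ρ) ℚ :=
    fun i k => if i = z then p * d k else ((if i = k then -χ else 0) + n i * d k) with hC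
  have hNC : N = C * b := by
    ext i j
    rw [Matrix.mul_apply]
    rcases eq_or_ne i z with hi | hi
    · have hterm : ∀ k, C z k * b k j = p * (d k * b k j) := by
        intro k
        simp only [hC, if_pos rfl]
        ring
      simp only [hNdef, Matrix.submatrix_apply, hi]
      rw [hM1j j, ha j, Finset.mul_sum]
      exact (Finset.sum_congr rfl fun k _ => hterm k).symm
    · have : ∀ k, C i k * b k j
          = (if i = k then -χ * b k j else 0) + n i * (d k * b k j) := by
        intro k; simp [hC, hi]; split <;> ring
      simp only [hNdef, Matrix.submatrix_apply]
      rw [hMij i hi j, ha j, Finset.sum_congr rfl fun k _ => this k,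
        Finset.sum_add_distrib, Finset.sum_ite_eq, if_pos (Finset.mem_univ i),
        ← Finset.mul_sum]
  -- determinant of C
  have hdetC : C.det = p * d z * (-χ) ^ (ρ - 1) := by
    by_cases hp : p = 0
    · rw [Matrix.det_eq_zero_of_row_eq_zero z (fun k => by simp [hC, hp]), hp]
      ring
    · set L : Matrix (Fin ρ) (Fin ρ) ℚ :=
        fun i k => if i = k then 1 else if k = z then n i / p else 0 with hL
      set U : Matrix (Fin ρ) (Fin ρ) ℚ :=
        fun i k => if i = z then p * d k else if i = k then -χ else 0 with hU
      have hzle : ∀ i : Fin ρ, z ≤ i := fun i => Fin.mk_le_of_le_val (Nat.zero_le _)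
      have hCLU : C = L * U := by
        ext i j
        rw [Matrix.mul_apply]
        rcases eq_or_ne i z with hi | hi
        · rw [Finset.sum_eq_single z]
          · simp [hL, hU, hC, hi]
          · intro k _ hk
            simp [hL, hU, hi, hk, Ne.symm hk]
          · simp
        · have hsub : (Finset.univ : Finset (Fin ρ)) ⊆ Finset.univ := le_refl _
          have hsum : ∑ k, L i k * U k j = ∑ k ∈ ({i, z} : Finset (Fin ρ)), L i k * U k j := by
            refine (Finset.sum_subset (Finset.subset_univ _) ?_).symm
            intro k _ hk
            simp only [Finset.mem_insert, Finset.mem_singleton, not_or] at hk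
            simp [hL, hU, Ne.symm hk.1, hk.2, fun h : i = k => hk.1 h.symm]
          rw [hsum, Finset.sum_pair hi]
          have h1 : L i i * U i j = if i = j then -χ else 0 := by
            simp [hL, hU, hi]
          have h2 : L i z * U z j = n i * d j := by
            simp only [hL, hU, if_neg hi, if_pos rfl, if_pos trivial]
            field_simp
          rw [h1, h2]
          simp [hC, hi]
      have hdetL : L.det = 1 := by
        rw [Matrix.det_of_lowerTriangular L]
        · simp [hL]
        · intro i j hij
          have hij' : i < j := hij
          have : i ≠ j := ne_of_lt hij'
          have hjz : j ≠ z := by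
            intro h; subst h; exact absurd (hzle i) (not_le.mpr hij')
          simp [hL, this, hjz]
      have hdetU : U.det = p * d z * (-χ) ^ (ρ - 1) := by
        rw [Matrix.det_of_upperTriangular]
        · have hdiag : ∀ i : Fin ρ, U i i = if i = z then p * d z else -χ := by
            intro i
            rcases eq_or_ne i z with h | h <;> simp [hU, h]
          rw [Finset.prod_congr rfl fun i _ => hdiag i,
            ← Finset.mul_prod_erase Finset.univ _ (Finset.mem_univ z), if_pos rfl]
          rw [Finset.prod_ite_of_false]
          · rw [Finset.prod_const, Finset.card_erase_of_mem (Finset.mem_univ z),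
              Finset.card_univ, Fintype.card_fin]
          · intro i hi
            exact (Finset.mem_erase.mp hi).1
        · intro i j hij
          have hij' : j < i := hij
          have hiz : i ≠ z := by
            intro h; subst h; exact absurd (hzle j) (not_le.mpr hij')
          simp [hU, hiz, ne_of_gt hij']
      rw [hCLU, Matrix.det_mul, hdetL, hdetU, one_mul]
  rw [step1, hNC, Matrix.det_mul, hdetC]
  ring
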